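/- Let k, n be integers with 3 ≤ k ≤ n. For the complete graph K_n, τ_k(K_n) = n − k. -/

import Mathlib

open SimpleGraph Finset

variable {V : Type*}

/-- A pedant `S`-Steiner tree in `G`: a subtree of `G` containing `S` in which
every vertex of `S` has degree one. -/
def IsPedantTree [Fintype V] (G : SimpleGraph V) (S : Finset V) (T : G.Subgraph) : Prop :=
  T.coe.IsTree ∧ (↑S : Set V) ⊆ T.verts ∧ ∀ v ∈ S, (T.neighborSet v).ncard = 1

/-- Two pedant `S`-Steiner trees are internally disjoint if they are edge-disjoint and
their vertex sets intersect exactly in `S`. -/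
def InternallyDisjoint [Fintype V] (G : SimpleGraph V) (S : Finset V)
    (T T' : G.Subgraph) : Prop :=
  T.edgeSet ∩ T'.edgeSet = ∅ ∧ T.verts ∩ T'.verts = (↑S : Set V)

/-- The local pedant-tree connectivity `τ_G(S)`: the maximum number of pairwise
internally disjoint pedant `S`-Steiner trees in `G`. -/
noncomputable def localPedantConn [Fintype V] (G : SimpleGraph V) (S : Finset V) : ℕ :=
  sSup {m | ∃ 𝒯 : Finset G.Subgraph, 𝒯.card = m ∧ (∀ T ∈ 𝒯, IsPedantTree G S T) ∧
    ∀ T ∈ 𝒯, ∀ T' ∈ 𝒯, T ≠ T' → InternallyDisjoint G S T T'}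

/-- The pedant tree-connectivity `τ_k(G) = min {τ_G(S) : |S| = k}`. -/
noncomputable def pedantConn [Fintype V] (G : SimpleGraph V) (k : ℕ) : ℕ :=
  sInf {m | ∃ S : Finset V, S.card = k ∧ localPedantConn G S = m}

/-- The vertex connectivity of `G`: the least size of a vertex set whose removal leaves a
graph which is not preconnected, or leaves at most one vertex. -/
noncomputable def vConn [Fintype V] (G : SimpleGraph V) : ℕ :=
  sInf {m | ∃ U : Finset V, U.card = m ∧
    (¬ (G.induce ((↑U : Set V)ᶜ)).Preconnected ∨ Fintype.card V ≤ m + 1)}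


section Aux
variable {W : Type*}

/-- A graph in which every edge is incident to a fixed vertex `c` is acyclic. -/
lemma isAcyclic_of_all_edges_center (G : SimpleGraph W) (c : W)
    (h : ∀ a b, G.Adj a b → a = c ∨ b = c) : G.IsAcyclic := by
  intro v w hw
  match w with
  | .nil => exact hw.ne_nil rfl
  | .cons h1 .nil => exact G.loopless.irrefl v h1
  | .cons (v := v1) h1 (.cons h2 .nil) =>
      have := hw.edges_nodup
      simp [Sym2.eq_swap] at this
  | .cons (v := v1) h1 (.cons (v := v2) h2 (.cons (v := v3) h3 r)) =>
      have hnd := hw.edges_nodup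
      simp only [SimpleGraph.Walk.edges_cons, List.nodup_cons, List.mem_cons] at hnd
      rcases h _ _ h1 with h1c | h1c
      · -- v = c, so v1 ≠ c, so v2 = c; edges s(v,v1)=s(v1,v2)
        have hv1 : v1 ≠ c := fun e => G.loopless.irrefl c (by rw [h1c, e] at h1; exact h1)
        rcases h _ _ h2 with h2c | h2c
        · exact hv1 h2c
        · exact hnd.1 (Or.inl (by rw [h1c, h2c, Sym2.eq_swap]))
      · -- v1 = c, so v2 ≠ c, so v3 = c; edges s(v1,v2)=s(v2,v3)
        have hv2 : v2 ≠ c := fun e => G.loopless.irrefl c (by rw [h1c, e] at h2; exact h2)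
        rcases h _ _ h3 with h3c | h3c
        · exact hv2 h3c
        · exact hnd.2.1 (Or.inl (by rw [h1c, h3c, Sym2.eq_swap]))

variable [Fintype W] [DecidableEq W]

/-- The star subgraph of `⊤` centered at `u` with leaves `S`. -/
def starSub (S : Finset W) (u : W) (hu : u ∉ S) : (⊤ : SimpleGraph W).Subgraph where
  verts := insert u (↑S : Set W)
  Adj a b := (a = u ∧ b ∈ S) ∨ (b = u ∧ a ∈ S)
  adj_sub := by
    rintro a b (⟨rfl, hb⟩ | ⟨rfl, ha⟩) <;> simp [top_adj] <;> rintro rfl <;> exact hu ‹_›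
  edge_vert := by rintro a b (⟨rfl, hb⟩ | ⟨rfl, ha⟩) <;> simp [*]
  symm := by constructor; rintro a b (⟨rfl, hb⟩ | ⟨rfl, ha⟩) <;> simp [*]

lemma starSub_isPedant (S : Finset W) (u : W) (hu : u ∉ S) (hS : S.Nonempty) :
    IsPedantTree (⊤ : SimpleGraph W) S (starSub S u hu) := by
  refine ⟨⟨?_, ?_⟩, ?_, ?_⟩
  · -- connected
    haveI : Nonempty ((starSub S u hu).verts) := ⟨⟨u, by simp [starSub]⟩⟩
    refine ⟨fun a b => ?_⟩
    have key : ∀ x : (starSub S u hu).verts, (starSub S u hu).coe.Reachable x ⟨u, by simp [starSub]⟩ := by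
      rintro ⟨x, hx⟩
      rcases (by simpa [starSub] using hx : x = u ∨ x ∈ S) with rfl | hxS
      · exact Reachable.refl _
      · have hadj : (starSub S u hu).Adj x u := Or.inr ⟨rfl, hxS⟩
        exact Adj.reachable ((Subgraph.coe_adj _ _ _).mpr hadj)
    exact (key a).trans (key b).symm
  · -- acyclic
    refine isAcyclic_of_all_edges_center _ ⟨u, by simp [starSub]⟩ ?_
    rintro ⟨a, ha⟩ ⟨b, hb⟩ hab
    rw [Subgraph.coe_adj] at hab
    rcases hab with ⟨h, _⟩ | ⟨h, _⟩
    · exact Or.inl (Subtype.ext h)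
    · exact Or.inr (Subtype.ext h)
  · -- S ⊆ verts
    intro v hv; simp [starSub]; exact Or.inr (by simpa using hv)
  · -- degrees
    intro v hv
    have : (starSub S u hu).neighborSet v = {u} := by
      ext x
      simp only [Subgraph.mem_neighborSet, starSub, Set.mem_singleton_iff]
      constructor
      · rintro (⟨rfl, _⟩ | ⟨rfl, _⟩)
        · exact absurd hv hu
        · rfl
      · rintro rfl; exact Or.inr ⟨rfl, hv⟩
    rw [this, Set.ncard_singleton]

lemma starSub_disjoint (S : Finset W) (u u' : W) (hu : u ∉ S) (hu' : u' ∉ S) (huu : u ≠ u') :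
    InternallyDisjoint (⊤ : SimpleGraph W) S (starSub S u hu) (starSub S u' hu') := by
  constructor
  · ext e
    induction e with
    | _ a b =>
      simp only [Set.mem_inter_iff, Subgraph.mem_edgeSet, Set.mem_empty_iff_false, iff_false]
      rintro ⟨⟨rfl, h1⟩ | ⟨rfl, h1⟩, ⟨h2, h3⟩ | ⟨h2, h3⟩⟩
      · exact huu h2
      · exact hu h3
      · exact hu h3
      · exact huu h2
  · ext x
    simp only [starSub, Set.mem_inter_iff, Set.mem_insert_iff, Finset.coe_insert, Finset.mem_coe]
    constructor
    · rintro ⟨rfl | hx, h2 | hx'⟩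
      · exact absurd h2 huu
      · exact hx'
      · exact hx
      · exact hx
    · intro hx; exact ⟨Or.inr hx, Or.inr hx⟩


lemma pedant_exists_internal {G : SimpleGraph W} (S : Finset W) (h3 : 3 ≤ S.card)
    {T : G.Subgraph} (hT : IsPedantTree G S T) : ∃ v ∈ T.verts, v ∉ S := by
  by_contra hcon
  push_neg at hcon
  obtain ⟨hTree, hsub, hdeg⟩ := hT
  obtain ⟨a, ha⟩ : S.Nonempty := Finset.card_pos.mp (by omega)
  have haV : a ∈ T.verts := hsub (by simpa using ha)
  obtain ⟨x, hx⟩ := Set.ncard_eq_one.mp (hdeg a ha)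
  have hax : T.Adj a x := by
    have : x ∈ T.neighborSet a := by rw [hx]; rfl
    exact this
  have hxV : x ∈ T.verts := hax.snd_mem
  have hxS : x ∈ S := hcon x hxV
  obtain ⟨y, hy⟩ := Set.ncard_eq_one.mp (hdeg x hxS)
  have hya : y = a := by
    have : a ∈ T.neighborSet x := hax.symm
    rw [hy] at this; exact this.symm
  rw [hya] at hy
  -- pick c ∈ S distinct from a and x
  have hcard : 1 ≤ (S \ {a, x}).card := by
    have := Finset.card_le_card_sdiff_add_card (s := S) (t := {a, x})
    have h2 : ({a, x} : Finset W).card ≤ 2 := Finset.card_insert_le _ _ |>.trans (by simp)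
    omega
  obtain ⟨c, hc⟩ := Finset.card_pos.mp hcard
  rw [Finset.mem_sdiff] at hc
  obtain ⟨hcS, hcax⟩ := hc
  simp only [Finset.mem_insert, Finset.mem_singleton, not_or] at hcax
  obtain ⟨hca, hcx⟩ := hcax
  have hcV : c ∈ T.verts := hsub (by simpa using hcS)
  obtain ⟨w⟩ := hTree.isConnected.preconnected ⟨a, haV⟩ ⟨c, hcV⟩
  have key : ∀ (z z' : T.verts) (w : T.coe.Walk z z'), (z' : W) = c →
      ((z : W) = a ∨ (z : W) = x) → False := by
    intro z z' w
    induction w with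
    | nil =>
      rintro rfl (h | h)
      · exact hca h
      · exact hcx h
    | cons hadj p ih =>
      rename_i z' z'' _
      rintro rfl (h | h)
      · have h1 : T.Adj a (z'' : W) := by rw [Subgraph.coe_adj] at hadj; rwa [h] at hadj
        have h2 : (z'' : W) ∈ T.neighborSet a := h1
        rw [hx] at h2
        exact ih rfl (Or.inr h2)
      · have h1 : T.Adj x (z'' : W) := by rw [Subgraph.coe_adj] at hadj; rwa [h] at hadj
        have h2 : (z'' : W) ∈ T.neighborSet x := h1
        rw [hy] at h2
        exact ih rfl (Or.inl h2)
  exact key ⟨a, haV⟩ ⟨c, hcV⟩ w rfl (Or.inl rfl)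

lemma family_card_le {G : SimpleGraph W} (S : Finset W) (h3 : 3 ≤ S.card)
    (𝒯 : Finset G.Subgraph) (hped : ∀ T ∈ 𝒯, IsPedantTree G S T)
    (hdisj : ∀ T ∈ 𝒯, ∀ T' ∈ 𝒯, T ≠ T' → InternallyDisjoint G S T T') :
    𝒯.card ≤ Fintype.card W - S.card := by
  haveI : Nonempty W := by
    rcases Finset.card_pos.mp (show 0 < S.card by omega) with ⟨a, _⟩; exact ⟨a⟩
  classical
  set f : G.Subgraph → W := fun T =>
    if h : ∃ v, v ∈ T.verts ∧ v ∉ S then h.choose else Classical.arbitrary W with hf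
  have hspec : ∀ T ∈ 𝒯, f T ∈ T.verts ∧ f T ∉ S := by
    intro T hT
    obtain ⟨v, hv, hvs⟩ := pedant_exists_internal S h3 (hped T hT)
    have h : ∃ v, v ∈ T.verts ∧ v ∉ S := ⟨v, hv, hvs⟩
    simp only [hf, dif_pos h]
    exact h.choose_spec
  have := Finset.card_le_card_of_injOn f (s := 𝒯) (t := Finset.univ \ S)
    (fun T hT => by
      rcases hspec T hT with ⟨_, h2⟩
      simp [Finset.mem_sdiff, h2])
    (by
      intro T hT T' hT' hfe
      by_contra hne
      obtain ⟨-, hvint⟩ := hdisj T hT T' hT' hne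
      have h1 := (hspec T hT).1
      have h2 := (hspec T' hT').1
      rw [← hfe] at h2
      have : f T ∈ (↑S : Set W) := by rw [← hvint]; exact ⟨h1, h2⟩
      exact (hspec T hT).2 (by simpa using this))
  rwa [Finset.card_sdiff_of_subset (Finset.subset_univ S), Finset.card_univ] at this

lemma localPedantConn_top (S : Finset W) (h3 : 3 ≤ S.card) :
    localPedantConn (⊤ : SimpleGraph W) S = Fintype.card W - S.card := by
  have hSne : S.Nonempty := Finset.card_pos.mp (by omega)
  classical
  set A := {m | ∃ 𝒯 : Finset (⊤ : SimpleGraph W).Subgraph, 𝒯.card = m ∧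
      (∀ T ∈ 𝒯, IsPedantTree ⊤ S T) ∧
      ∀ T ∈ 𝒯, ∀ T' ∈ 𝒯, T ≠ T' → InternallyDisjoint ⊤ S T T'} with hA
  have hub : ∀ m ∈ A, m ≤ Fintype.card W - S.card := by
    rintro m ⟨𝒯, rfl, hped, hdisj⟩
    exact family_card_le S h3 𝒯 hped hdisj
  have hmem : Fintype.card W - S.card ∈ A := by
    set g : {u // u ∈ Finset.univ \ S} → (⊤ : SimpleGraph W).Subgraph :=
      fun u => starSub S u.1 (by have := u.2; rw [Finset.mem_sdiff] at this; exact this.2) with hg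
    have hverts : ∀ u, (g u).verts = insert u.1 (↑S : Set W) := fun u => rfl
    have hginj : Function.Injective g := by
      intro u u' he
      have h1 : (u : W) ∈ insert (u' : W) (↑S : Set W) := by
        rw [← hverts u', ← he, hverts u]; exact Set.mem_insert _ _
      rcases Set.mem_insert_iff.mp h1 with h | h
      · exact Subtype.ext h
      · exact absurd h (by have := u.2; rw [Finset.mem_sdiff] at this; simpa using this.2)
    refine ⟨(Finset.univ \ S).attach.image g, ?_, ?_, ?_⟩
    · rw [Finset.card_image_of_injective _ hginj, Finset.card_attach,
        Finset.card_sdiff_of_subset (Finset.subset_univ S), Finset.card_univ]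
    · intro T hT
      rcases Finset.mem_image.mp hT with ⟨u, _, rfl⟩
      exact starSub_isPedant S u.1 _ hSne
    · intro T hT T' hT' hne
      rcases Finset.mem_image.mp hT with ⟨u, _, rfl⟩
      rcases Finset.mem_image.mp hT' with ⟨u', _, rfl⟩
      have huu : (u : W) ≠ (u' : W) := fun h => hne (congrArg g (Subtype.ext h))
      exact starSub_disjoint S u.1 u'.1 _ _ huu
  have hne : A.Nonempty := ⟨_, hmem⟩
  have hbdd : BddAbove A := ⟨Fintype.card W - S.card, hub⟩
  exact le_antisymm (csSup_le hne hub) (le_csSup hbdd hmem)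

end Aux

/-- `τ_k(K_n) = n − k` for `3 ≤ k ≤ n`. -/
theorem pedantConn_completeGraph (n k : ℕ) (h3 : 3 ≤ k) (hkn : k ≤ n) :
    pedantConn (⊤ : SimpleGraph (Fin n)) k = n - k := by
  have hset : {m | ∃ S : Finset (Fin n), S.card = k ∧
      localPedantConn (⊤ : SimpleGraph (Fin n)) S = m} = {n - k} := by
    ext m
    simp only [Set.mem_setOf_eq, Set.mem_singleton_iff]
    constructor
    · rintro ⟨S, hS, rfl⟩
      rw [localPedantConn_top S (by omega), Fintype.card_fin, hS]
    · rintro rfl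
      obtain ⟨S, -, hS⟩ := Finset.exists_subset_card_eq (s := (Finset.univ : Finset (Fin n))) (n := k)
        (by simpa using hkn)
      exact ⟨S, hS, by rw [localPedantConn_top S (by omega), Fintype.card_fin, hS]⟩
  rw [pedantConn, hset, csInf_singleton]
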